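/- Fix finite alphabets 𝒳, 𝒴, 𝒵 and channels p_{Y|X}, p_{Z|X}. Let ℛ be the set of pairs (r₁, r_s) of nonnegative real numbers for which there exist finitely supported random variables W, U, X forming a Markov chain W → U → X → (Y,Z) with |𝒰| ≤ (|𝒳|+1)(|𝒳|+3) and |𝒲| ≤ |𝒳|+3, where conditionally on X the outputs satisfy Y ∼ p_{Y|X}(·|X) and Z ∼ p_{Z|X}(·|X), such that r_s + r₁ ≤ I(Y;U|W) + min( I(Y;W), I(Z;W) ) and r_s ≤ I(Y;U|W) − I(Z;U|W). Let ℛ' be defined identically except that the first inequality is replaced by r_s + r₁ ≤ I(Y;U,W). Then ℛ = ℛ'. -/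

import Mathlib

open scoped BigOperators Classical

noncomputable section

/-- A stochastic map (conditional probability distribution). -/
def IsStochastic {B A : Type*} [Fintype A] (p : B → A → ℝ) : Prop :=
  (∀ b a, 0 ≤ p b a) ∧ ∀ b, ∑ a, p b a = 1

/-- Shannon entropy (base 2) of a finitely supported pmf. -/
def ent {A : Type*} [Fintype A] (p : A → ℝ) : ℝ := -∑ a, p a * Real.logb 2 (p a)

section MutualInformation

variable {𝒲 𝒰 𝒳' 𝒪 : Type*} [Fintype 𝒲] [Fintype 𝒰] [Fintype 𝒳'] [Fintype 𝒪]

/-- For the joint law `p(w,u,x,o) = q(w,u,x)·Ch(o|x)`: the mutual information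
`I(O; U, W) = H(O) + H(U,W) − H(O,U,W)`. -/
def miO_UW (q : 𝒲 × 𝒰 × 𝒳' → ℝ) (Ch : 𝒳' → 𝒪 → ℝ) : ℝ :=
  ent (fun o : 𝒪 => ∑ w, ∑ u, ∑ x, q (w, u, x) * Ch x o)
  + ent (fun p : 𝒰 × 𝒲 => ∑ x, q (p.2, p.1, x))
  - ent (fun p : 𝒪 × 𝒰 × 𝒲 => ∑ x, q (p.2.2, p.2.1, x) * Ch x p.1)

/-- The conditional mutual information `I(O; U | W) = H(O,W) + H(U,W) − H(O,U,W) − H(W)`. -/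
def miO_U_W (q : 𝒲 × 𝒰 × 𝒳' → ℝ) (Ch : 𝒳' → 𝒪 → ℝ) : ℝ :=
  ent (fun p : 𝒪 × 𝒲 => ∑ u, ∑ x, q (p.2, u, x) * Ch x p.1)
  + ent (fun p : 𝒰 × 𝒲 => ∑ x, q (p.2, p.1, x))
  - ent (fun p : 𝒪 × 𝒰 × 𝒲 => ∑ x, q (p.2.2, p.2.1, x) * Ch x p.1)
  - ent (fun w : 𝒲 => ∑ u, ∑ x, q (w, u, x))

/-- The mutual information `I(O; W) = H(O) + H(W) − H(O,W)`. -/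
def miO_W (q : 𝒲 × 𝒰 × 𝒳' → ℝ) (Ch : 𝒳' → 𝒪 → ℝ) : ℝ :=
  ent (fun o : 𝒪 => ∑ w, ∑ u, ∑ x, q (w, u, x) * Ch x o)
  + ent (fun w : 𝒲 => ∑ u, ∑ x, q (w, u, x))
  - ent (fun p : 𝒪 × 𝒲 => ∑ u, ∑ x, q (p.2, u, x) * Ch x p.1)

end MutualInformation

lemma chain_split {𝒲 𝒰 𝒳' 𝒪 : Type*} [Fintype 𝒲] [Fintype 𝒰] [Fintype 𝒳'] [Fintype 𝒪]
    (q : 𝒲 × 𝒰 × 𝒳' → ℝ) (Ch : 𝒳' → 𝒪 → ℝ) :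
    miO_UW q Ch = miO_U_W q Ch + miO_W q Ch := by
  unfold miO_UW miO_U_W miO_W; ring

lemma ent_prod_kernel {S T : Type*} [Fintype S] [Fintype T] (m : S → ℝ) (k : S → T → ℝ)
    (hksum : ∀ s, ∑ t, k s t = 1) :
    ent (fun p : T × S => m p.2 * k p.2 p.1) = ent m + ∑ s, m s * ent (k s) := by
  unfold ent
  rw [Fintype.sum_prod_type, Finset.sum_comm]
  have key : ∀ s t, m s * k s t * Real.logb 2 (m s * k s t)
      = k s t * (m s * Real.logb 2 (m s)) + m s * (k s t * Real.logb 2 (k s t)) := by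
    intro s t
    by_cases hm : m s = 0
    · simp [hm]
    by_cases hk : k s t = 0
    · simp [hk]
    rw [Real.logb_mul hm hk]; ring
  simp_rw [key]
  rw [show (∑ s, ∑ t, (k s t * (m s * Real.logb 2 (m s)) + m s * (k s t * Real.logb 2 (k s t))))
      = ∑ s, (m s * Real.logb 2 (m s) + m s * ∑ t, k s t * Real.logb 2 (k s t)) from by
    refine Finset.sum_congr rfl fun s _ => ?_
    rw [Finset.sum_add_distrib, ← Finset.sum_mul, hksum s, one_mul, ← Finset.mul_sum]]
  rw [Finset.sum_add_distrib, neg_add]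
  congr 1
  rw [← Finset.sum_neg_distrib]
  exact Finset.sum_congr rfl fun s _ => by ring

lemma ent_prod_fin_one {α : Type*} [Fintype α] (F : α × Fin 1 → ℝ) (g : α → ℝ)
    (h : ∀ a, F (a, 0) = g a) : ent F = ent g := by
  unfold ent
  rw [Fintype.sum_prod_type]
  simp [h]

lemma ent_fin1_mid {α β : Type*} [Fintype α] [Fintype β] (f : α × β × Fin 1 → ℝ) (g : α × β → ℝ)
    (h : ∀ a b, f (a, b, 0) = g (a, b)) :
    ent f = ent g := by
  unfold ent
  rw [Fintype.sum_prod_type, Fintype.sum_prod_type]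
  simp_rw [Fintype.sum_prod_type, Fin.sum_univ_one, h]

lemma ent_fin_one (f : Fin 1 → ℝ) (h : f 0 = 1) : ent f = 0 := by
  unfold ent; simp [Fin.sum_univ_one, h]

section Collapse
variable {𝒲 𝒰 𝒳' 𝒪 : Type*} [Fintype 𝒲] [Fintype 𝒰] [Fintype 𝒳'] [Fintype 𝒪]
variable (a : 𝒲 × 𝒰 → ℝ) (b : 𝒰 → 𝒳' → ℝ) (Ch : 𝒳' → 𝒪 → ℝ)

lemma fin1_miO_W (ha1 : ∑ t, a t = 1) (hb : ∀ u, ∑ x, b u x = 1) :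
    miO_W (fun t : Fin 1 × 𝒰 × 𝒳' => (∑ w, a (w, t.2.1)) * b t.2.1 t.2.2) Ch = 0 := by
  unfold miO_W
  have hsum1 : ∑ u, ∑ x, (∑ w, a (w, u)) * b u x = 1 := by
    simp_rw [← Finset.mul_sum, hb, mul_one]
    rw [← ha1, Fintype.sum_prod_type, Finset.sum_comm]
  rw [ent_fin_one _ hsum1,
      ent_prod_fin_one (g := fun o : 𝒪 => ∑ u, ∑ x, ((∑ w, a (w, u)) * b u x) * Ch x o)
        _ (fun o => rfl),
      show (fun o : 𝒪 => ∑ w : Fin 1, ∑ u, ∑ x, ((∑ w', a (w', u)) * b u x) * Ch x o)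
        = (fun o : 𝒪 => ∑ u, ∑ x, ((∑ w', a (w', u)) * b u x) * Ch x o) from by
        funext o; rw [Fin.sum_univ_one]]
  ring

lemma fin1_miO_U_W (ha1 : ∑ t, a t = 1) (hb : ∀ u, ∑ x, b u x = 1)
    (hCh : ∀ x, ∑ o, Ch x o = 1) :
    miO_U_W (fun t : Fin 1 × 𝒰 × 𝒳' => (∑ w, a (w, t.2.1)) * b t.2.1 t.2.2) Ch
      = miO_UW (fun t : 𝒲 × 𝒰 × 𝒳' => a (t.1, t.2.1) * b t.2.1 t.2.2) Ch := by
  unfold miO_U_W miO_UW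
  set c : 𝒰 → 𝒪 → ℝ := fun u o => ∑ x, b u x * Ch x o with hc
  have hcsum : ∀ u, ∑ o, c u o = 1 := by
    intro u
    rw [hc]
    simp only []
    rw [Finset.sum_comm]
    simp_rw [← Finset.mul_sum, hCh, mul_one]
    exact hb u
  have hsum1 : ∑ u, ∑ x, (∑ w, a (w, u)) * b u x = 1 := by
    simp_rw [← Finset.mul_sum, hb, mul_one]
    rw [← ha1, Fintype.sum_prod_type, Finset.sum_comm]
  -- H(W') = 0
  rw [ent_fin_one _ hsum1]
  -- T1 = S1
  have hT1 : (fun p : 𝒪 × Fin 1 => ∑ u, ∑ x, ((∑ w, a (w, u)) * b u x) * Ch x p.1)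
      = fun p : 𝒪 × Fin 1 => ∑ w, ∑ u, ∑ x, (a (w, u) * b u x) * Ch x p.1 := by
    funext p
    simp_rw [Finset.sum_mul]
    calc ∑ u, ∑ x, ∑ w, (a (w, u) * b u x) * Ch x p.1
        = ∑ u, ∑ w, ∑ x, (a (w, u) * b u x) * Ch x p.1 :=
          Finset.sum_congr rfl fun u _ => Finset.sum_comm
      _ = ∑ w, ∑ u, ∑ x, (a (w, u) * b u x) * Ch x p.1 := Finset.sum_comm
  rw [hT1, ent_prod_fin_one (g := fun o : 𝒪 => ∑ w, ∑ u, ∑ x, (a (w, u) * b u x) * Ch x o)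
        _ (fun o => rfl)]
  -- T2 : U marginal
  have hT2 : ent (fun p : 𝒰 × Fin 1 => ∑ x, (∑ w, a (w, p.1)) * b p.1 x)
      = ent (fun u : 𝒰 => ∑ w, a (w, u)) := by
    refine ent_prod_fin_one _ _ fun u => ?_
    rw [← Finset.mul_sum, hb, mul_one]
  -- T3 via kernel
  have hT3 : ent (fun p : 𝒪 × 𝒰 × Fin 1 => ∑ x, ((∑ w, a (w, p.2.1)) * b p.2.1 x) * Ch x p.1)
      = ent (fun u : 𝒰 => ∑ w, a (w, u)) + ∑ u, (∑ w, a (w, u)) * ent (c u) := by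
    rw [ent_fin1_mid _ (fun p : 𝒪 × 𝒰 => (∑ w, a (w, p.2)) * c p.2 p.1) (by
      intro o u
      simp only [hc]
      rw [Finset.mul_sum]
      exact Finset.sum_congr rfl fun x _ => by ring)]
    exact ent_prod_kernel (fun u => ∑ w, a (w, u)) c hcsum
  -- S2 : (U,W) marginal
  have hS2 : ent (fun p : 𝒰 × 𝒲 => ∑ x, a (p.2, p.1) * b p.1 x)
      = ent (fun p : 𝒰 × 𝒲 => a (p.2, p.1)) := by
    congr 1; funext p; rw [← Finset.mul_sum, hb, mul_one]
  -- S3 via kernel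
  have hS3 : ent (fun p : 𝒪 × 𝒰 × 𝒲 => ∑ x, (a (p.2.2, p.2.1) * b p.2.1 x) * Ch x p.1)
      = ent (fun p : 𝒰 × 𝒲 => a (p.2, p.1)) + ∑ u, (∑ w, a (w, u)) * ent (c u) := by
    have := ent_prod_kernel (fun s : 𝒰 × 𝒲 => a (s.2, s.1)) (fun s => c s.1)
      (fun s => hcsum s.1)
    rw [show (fun p : 𝒪 × 𝒰 × 𝒲 => ∑ x, (a (p.2.2, p.2.1) * b p.2.1 x) * Ch x p.1)
        = (fun p : 𝒪 × (𝒰 × 𝒲) => a (p.2.2, p.2.1) * c p.2.1 p.1) from by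
      funext p
      simp only [hc]
      rw [Finset.mul_sum]
      exact Finset.sum_congr rfl fun x _ => by ring]
    rw [this]
    congr 1
    rw [Fintype.sum_prod_type]
    refine Finset.sum_congr rfl fun u _ => ?_
    rw [Finset.sum_mul]
  rw [hT2, hT3, hS2, hS3]
  ring

end Collapse


/-- Corollary `cor:ck1713`: the region `ℛ` of pairs `(r₁, r_s)` of
nonnegative reals for which there exist finitely supported random variables
`W, U, X` with Markov chain `W → U → X → (Y,Z)` (encoded by a pmf `a` on `𝒲 × 𝒰`
and a stochastic map `b ∈ P(𝒳|𝒰)`), `|𝒰| ≤ (|𝒳|+1)(|𝒳|+3)`, `|𝒲| ≤ |𝒳|+3`,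
`r_s + r₁ ≤ I(Y;U|W) + min(I(Y;W), I(Z;W))` and `r_s ≤ I(Y;U|W) − I(Z;U|W)`,
coincides with the region `ℛ'` defined identically except with the first
inequality replaced by `r_s + r₁ ≤ I(Y;U,W)`. -/
theorem statement6 {𝒳 𝒴 𝒵 : Type} [Fintype 𝒳] [Fintype 𝒴] [Fintype 𝒵]
    (Wc : 𝒳 → 𝒴 → ℝ) (Vc : 𝒳 → 𝒵 → ℝ)
    (hWc : IsStochastic Wc) (hVc : IsStochastic Vc) :
    { p : ℝ × ℝ | 0 ≤ p.1 ∧ 0 ≤ p.2 ∧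
      ∃ wc uc : ℕ,
        uc ≤ (Fintype.card 𝒳 + 1) * (Fintype.card 𝒳 + 3) ∧
        wc ≤ Fintype.card 𝒳 + 3 ∧
        ∃ (a : Fin wc × Fin uc → ℝ) (b : Fin uc → 𝒳 → ℝ),
          (∀ t, 0 ≤ a t) ∧ (∑ t, a t = 1) ∧ IsStochastic b ∧
          p.2 + p.1 ≤ miO_U_W (fun t => a (t.1, t.2.1) * b t.2.1 t.2.2) Wc
            + min (miO_W (fun t => a (t.1, t.2.1) * b t.2.1 t.2.2) Wc)
                  (miO_W (fun t => a (t.1, t.2.1) * b t.2.1 t.2.2) Vc) ∧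
          p.2 ≤ miO_U_W (fun t => a (t.1, t.2.1) * b t.2.1 t.2.2) Wc
            - miO_U_W (fun t => a (t.1, t.2.1) * b t.2.1 t.2.2) Vc }
    =
    { p : ℝ × ℝ | 0 ≤ p.1 ∧ 0 ≤ p.2 ∧
      ∃ wc uc : ℕ,
        uc ≤ (Fintype.card 𝒳 + 1) * (Fintype.card 𝒳 + 3) ∧
        wc ≤ Fintype.card 𝒳 + 3 ∧
        ∃ (a : Fin wc × Fin uc → ℝ) (b : Fin uc → 𝒳 → ℝ),
          (∀ t, 0 ≤ a t) ∧ (∑ t, a t = 1) ∧ IsStochastic b ∧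
          p.2 + p.1 ≤ miO_UW (fun t => a (t.1, t.2.1) * b t.2.1 t.2.2) Wc ∧
          p.2 ≤ miO_U_W (fun t => a (t.1, t.2.1) * b t.2.1 t.2.2) Wc
            - miO_U_W (fun t => a (t.1, t.2.1) * b t.2.1 t.2.2) Vc } := by
  ext p
  obtain ⟨r1, rs⟩ := p
  simp only [Set.mem_setOf_eq]
  constructor
  · rintro ⟨h1, h2, wc, uc, hu, hw, a, b, ha0, ha1, hb, hsum, hsec⟩
    refine ⟨h1, h2, wc, uc, hu, hw, a, b, ha0, ha1, hb, ?_, hsec⟩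
    rw [chain_split]
    refine le_trans hsum (add_le_add le_rfl (min_le_left _ _))
  · rintro ⟨h1, h2, wc, uc, hu, hw, a, b, ha0, ha1, hb, hsum, hsec⟩
    by_cases hcase : miO_W (fun t => a (t.1, t.2.1) * b t.2.1 t.2.2) Wc
        ≤ miO_W (fun t => a (t.1, t.2.1) * b t.2.1 t.2.2) Vc
    · refine ⟨h1, h2, wc, uc, hu, hw, a, b, ha0, ha1, hb, ?_, hsec⟩
      rw [min_eq_left hcase, ← chain_split]
      exact hsum
    · refine ⟨h1, h2, 1, uc, hu, by omega, (fun t => ∑ w, a (w, t.2)), b,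
        fun t => Finset.sum_nonneg fun w _ => ha0 _, ?_, hb, ?_, ?_⟩
      · rw [Fintype.sum_prod_type, Fin.sum_univ_one, ← ha1, Fintype.sum_prod_type,
          Finset.sum_comm]
      · show rs + r1 ≤ miO_U_W (fun t : Fin 1 × Fin uc × 𝒳 =>
            (∑ w, a (w, t.2.1)) * b t.2.1 t.2.2) Wc
          + min (miO_W (fun t : Fin 1 × Fin uc × 𝒳 =>
              (∑ w, a (w, t.2.1)) * b t.2.1 t.2.2) Wc)
                (miO_W (fun t : Fin 1 × Fin uc × 𝒳 =>
              (∑ w, a (w, t.2.1)) * b t.2.1 t.2.2) Vc)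
        rw [fin1_miO_U_W a b Wc ha1 hb.2 hWc.2, fin1_miO_W a b Wc ha1 hb.2,
          fin1_miO_W a b Vc ha1 hb.2]
        simpa using hsum
      · show rs ≤ miO_U_W (fun t : Fin 1 × Fin uc × 𝒳 =>
            (∑ w, a (w, t.2.1)) * b t.2.1 t.2.2) Wc
          - miO_U_W (fun t : Fin 1 × Fin uc × 𝒳 =>
            (∑ w, a (w, t.2.1)) * b t.2.1 t.2.2) Vc
        rw [fin1_miO_U_W a b Wc ha1 hb.2 hWc.2, fin1_miO_U_W a b Vc ha1 hb.2 hVc.2,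
          chain_split, chain_split]
        push_neg at hcase
        linarith
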